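/- Let T be a normed height tree. Then the canonical ultrametric d on the boundary ∂T, defined by d(x,y) = max{‖z‖ : z ∈ (x ∪ y) ∩ suc(x ∧ y)} for distinct branches x,y and d(x,x)=0, generates the canonical topology on ∂T, i.e., the metric topology of d coincides with the topology generated by the subbase {⇑x : x ∈ T, ℏ(x) ≠ −1} ∪ {∂T \ ⇑x : x ∈ T}. -/

import Mathlib

open Set

/-- The linearly ordered class of heights: `⊥` plays the role of `−1`, ordinals are
coerced, and `⊤` plays the role of `∞`. -/
abbrev Hgt : Type 1 := WithBot (WithTop Ordinal.{0})

/-- A height tree: a tree (a partial order with least element whose lower sets are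
finite chains) with a height function satisfying the axioms of Definition 2.2. -/
structure HeightTree where
  /-- the underlying set of vertices -/
  T : Type
  [po : PartialOrder T]
  [bot : OrderBot T]
  /-- lower sets are finite -/
  lower_finite : ∀ x : T, (Set.Iic x).Finite
  /-- lower sets are chains -/
  lower_chain : ∀ x : T, IsChain (· ≤ ·) (Set.Iic x)
  /-- the height function -/
  h : T → Hgt
  /-- all non-`⊥`, non-`⊤` heights are countable ordinals -/
  h_countable : ∀ x : T, ∀ α : Ordinal.{0},
    h x = ((α : WithTop Ordinal.{0}) : Hgt) → α.card ≤ Cardinal.aleph0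
  /-- each vertex has exactly one successor of height `−1` (its central point) -/
  center : ∀ x : T, ∃! y : T, x ⋖ y ∧ h y = ⊥
  /-- if `h x ∈ {−1, 0}` then the central point is the only successor of `x` -/
  succ_single : ∀ x : T, h x ≤ (0 : Hgt) → ∀ y z : T, x ⋖ y → x ⋖ z → y = z
  /-- if `h x > 0` then `x` has countably infinitely many successors -/
  succ_ctble : ∀ x : T, (0 : Hgt) < h x →
    {y : T | x ⋖ y}.Countable ∧ {y : T | x ⋖ y}.Infinite
  /-- if `h x = ∞` then all but finitely many successors of `x` have height `∞` -/
  succ_top : ∀ x : T, h x = (⊤ : Hgt) → {y : T | x ⋖ y ∧ h y ≠ (⊤ : Hgt)}.Finite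
  /-- if `0 < h x < ∞` then `h x = lim_{y ∈ suc x} (h y + 1)`: it is an upper bound … -/
  succ_le : ∀ x : T, (0 : Hgt) < h x → h x < (⊤ : Hgt) → ∀ y : T, x ⋖ y → h y + 1 ≤ h x
  /-- … and for every `β < h x` all but finitely many successors `y` have `β < h y + 1` -/
  succ_lim : ∀ x : T, (0 : Hgt) < h x → h x < (⊤ : Hgt) →
    ∀ β : Hgt, β < h x → {y : T | x ⋖ y ∧ ¬ β < h y + 1}.Finite

attribute [instance] HeightTree.po HeightTree.bot

/-- The boundary of a tree: the set of its branches (maximal chains). -/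
def HeightTree.Branch (t : HeightTree) : Type :=
  {b : Set t.T // IsMaxChain (· ≤ ·) b}

/-- The set `⇑x` of branches containing a vertex `x`. -/
def HeightTree.up (t : HeightTree) (x : t.T) : Set t.Branch := {b | x ∈ b.1}

/-- The canonical topology on the boundary of a height tree, generated by the subbase
`{⇑x : h x ≠ −1} ∪ {∂T \ ⇑x : x ∈ T}`. -/
def HeightTree.canonTop (t : HeightTree) : TopologicalSpace t.Branch :=
  TopologicalSpace.generateFrom
    ({S | ∃ x : t.T, t.h x ≠ ⊥ ∧ S = t.up x} ∪ {S | ∃ x : t.T, S = (t.up x)ᶜ})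

/-- A norm on a height tree. -/
structure IsTreeNorm (t : HeightTree) (n : t.T → ℝ) : Prop where
  mono : ∀ x y : t.T, x ≤ y → n y ≤ n x
  nonneg : ∀ x : t.T, 0 ≤ n x
  zero_iff : ∀ x : t.T, n x = 0 ↔ t.h x = ⊥
  finite : ∀ ε : ℝ, 0 < ε → {x : t.T | ε ≤ n x}.Finite

/-- `d` is the canonical distance on the boundary determined by the norm `n`:
`d x x = 0` and, for distinct branches `x ≠ y` with meet `m = max (x ∩ y)`,
`d x y = max {‖z‖ : z ∈ (x ∪ y) ∩ suc m}`. -/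
def IsCanonDist (t : HeightTree) (n : t.T → ℝ) (d : t.Branch → t.Branch → ℝ) : Prop :=
  (∀ b : t.Branch, d b b = 0) ∧
  ∀ x y : t.Branch, x ≠ y → ∀ m : t.T, IsGreatest (x.1 ∩ y.1) m →
    IsGreatest (n '' ((x.1 ∪ y.1) ∩ {z : t.T | m ⋖ z})) (d x y)


namespace HeightTree

variable {t : HeightTree}

/-- If inserting `a` into a branch keeps it a chain, then `a` is in the branch. -/
lemma Branch.mem_of_chain_insert (b : t.Branch) {a : t.T}
    (h : IsChain (· ≤ ·) (insert a b.1)) : a ∈ b.1 := by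
  have := b.2.2 h (Set.subset_insert a b.1)
  rw [this]; exact Set.mem_insert a b.1

lemma Branch.bot_mem (b : t.Branch) : (⊥ : t.T) ∈ b.1 :=
  b.mem_of_chain_insert (b.2.1.insert fun s _ _ => Or.inl bot_le)

/-- Branches are downward closed. -/
lemma Branch.mem_of_le (b : t.Branch) {u v : t.T} (huv : u ≤ v) (hv : v ∈ b.1) :
    u ∈ b.1 := by
  refine b.mem_of_chain_insert (b.2.1.insert fun s hs hne => ?_)
  rcases eq_or_ne s v with rfl | hsv
  · exact Or.inl huv
  · rcases b.2.1 hs hv hsv with h1 | h1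
    · rcases eq_or_ne u s with rfl | hus
      · exact Or.inl le_rfl
      · exact t.lower_chain v huv h1 hus
    · exact Or.inl (le_trans huv h1)

lemma Branch.comparable (b : t.Branch) {u v : t.T} (hu : u ∈ b.1) (hv : v ∈ b.1) :
    u ≤ v ∨ v ≤ u := by
  rcases eq_or_ne u v with rfl | hne
  · exact Or.inl le_rfl
  · exact b.2.1 hu hv hne

/-- A finite nonempty chain has a greatest element. -/
lemma chain_greatest {s : Set t.T} (hfin : s.Finite) (hne : s.Nonempty)
    (hch : IsChain (· ≤ ·) s) : ∃ m, IsGreatest s m := by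
  obtain ⟨m, hm, hmax⟩ := hfin.exists_maximal hne
  refine ⟨m, hm, fun a ha => ?_⟩
  rcases eq_or_ne a m with rfl | hne'
  · exact le_rfl
  · rcases hch ha hm hne' with h | h
    · exact h
    · exact hmax ha h

/-- A finite nonempty chain has a least element. -/
lemma chain_least {s : Set t.T} (hfin : s.Finite) (hne : s.Nonempty)
    (hch : IsChain (· ≤ ·) s) : ∃ m, IsLeast s m := by
  obtain ⟨m, hm, hmin⟩ := hfin.exists_minimal hne
  refine ⟨m, hm, fun a ha => ?_⟩
  rcases eq_or_ne a m with rfl | hne'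
  · exact le_rfl
  · rcases hch ha hm hne' with h | h
    · exact hmin ha h
    · exact h

/-- Every element of a branch has a successor in the branch, which covers it and is
the least element of the branch above it. -/
lemma Branch.exists_succ (b : t.Branch) {v : t.T} (hv : v ∈ b.1) :
    ∃ c ∈ b.1, v ⋖ c ∧ ∀ u ∈ b.1, v < u → c ≤ u := by
  -- there is some element of the branch above `v`
  have hex : ∃ u ∈ b.1, v < u := by
    by_contra hno
    push_neg at hno
    obtain ⟨w, ⟨hw, -⟩, -⟩ := t.center v
    have hwb : w ∈ b.1 := by
      refine b.mem_of_chain_insert (b.2.1.insert fun s hs _ => ?_)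
      have hsv : s ≤ v := by
        rcases b.comparable hs hv with h | h
        · exact h
        · rcases eq_or_lt_of_le h with he | hlt
          · exact he.ge
          · exact absurd hlt (hno s hs)
      exact Or.inr (hsv.trans hw.1.le)
    exact hno w hwb hw.1
  obtain ⟨u, hu, hvu⟩ := hex
  have hSfin : {s | s ∈ b.1 ∧ v < s ∧ s ≤ u}.Finite :=
    (t.lower_finite u).subset fun s hs => hs.2.2
  have hSne : {s | s ∈ b.1 ∧ v < s ∧ s ≤ u}.Nonempty := ⟨u, hu, hvu, le_rfl⟩
  have hSch : IsChain (· ≤ ·) {s | s ∈ b.1 ∧ v < s ∧ s ≤ u} :=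
    b.2.1.mono fun s hs => hs.1
  obtain ⟨c, ⟨hcb, hvc, hcu⟩, hcle⟩ := chain_least hSfin hSne hSch
  have hcov : v ⋖ c := by
    refine ⟨hvc, fun w hvw hwc => ?_⟩
    have hwu : w ≤ u := hwc.le.trans hcu
    have hwb : w ∈ b.1 := by
      refine b.mem_of_chain_insert (b.2.1.insert fun s hs _ => ?_)
      rcases b.comparable hs hu with h | h
      · rcases eq_or_ne w s with rfl | hws
        · exact Or.inl le_rfl
        · exact t.lower_chain u hwu h hws
      · exact Or.inl (hwu.trans h)
    exact absurd (hcle ⟨hwb, hvw, hwu⟩) (not_le_of_gt hwc)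
  refine ⟨c, hcb, hcov, fun u' hu' hvu' => ?_⟩
  rcases b.comparable hcb hu' with h | h
  · exact h
  · rcases eq_or_ne u' c with rfl | hne
    · exact le_rfl
    · exact absurd (lt_of_le_of_ne h hne) (hcov.2 hvu')

/-- A branch contains at most one cover of any element. -/
lemma Branch.cover_unique (b : t.Branch) {v c c' : t.T} (hc : c ∈ b.1) (hc' : c' ∈ b.1)
    (h1 : v ⋖ c) (h2 : v ⋖ c') : c = c' := by
  rcases b.comparable hc hc' with h | h
  · exact (lt_or_eq_of_le h).elim (fun hlt => absurd hlt (h2.2 h1.1)) id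
  · exact ((lt_or_eq_of_le h).elim (fun hlt => absurd hlt (h1.2 h2.1)) id).symm

/-- Two distinct branches have a meet: a greatest common element. -/
lemma exists_meet (x y : t.Branch) (hne : x ≠ y) : ∃ m, IsGreatest (x.1 ∩ y.1) m := by
  have key : ∀ x y : t.Branch, ∀ v : t.T, v ∈ x.1 → v ∉ y.1 →
      ∃ m, IsGreatest (x.1 ∩ y.1) m := by
    intro x y v hvx hvy
    have hsub : x.1 ∩ y.1 ⊆ Set.Iic v := by
      rintro w ⟨hwx, hwy⟩
      rcases x.comparable hwx hvx with h | h
      · exact h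
      · exact absurd (y.mem_of_le h hwy) hvy
    exact chain_greatest ((t.lower_finite v).subset hsub)
      ⟨⊥, x.bot_mem, y.bot_mem⟩ (x.2.1.mono Set.inter_subset_left)
  by_cases hsub : x.1 ⊆ y.1
  · obtain ⟨v, hvy, hvx⟩ := Set.not_subset.mp
      (fun h => hne (Subtype.ext (Set.Subset.antisymm hsub h)))
    obtain ⟨m, hm⟩ := key y x v hvy hvx
    exact ⟨m, by rwa [Set.inter_comm]⟩
  · obtain ⟨v, hvx, hvy⟩ := Set.not_subset.mp hsub
    exact key x y v hvx hvy


section Dist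

variable {t : HeightTree} {n : t.T → ℝ} {d : t.Branch → t.Branch → ℝ}

lemma norm_pos (hn : IsTreeNorm t n) {v : t.T} (h : t.h v ≠ ⊥) : 0 < n v :=
  lt_of_le_of_ne (hn.nonneg v) fun he => h ((hn.zero_iff v).mp he.symm)

/-- Two distinct covers of a common element cannot both have norm zero. -/
lemma covers_pos (hn : IsTreeNorm t n) {p c u : t.T} (hc : p ⋖ c) (hu : p ⋖ u)
    (hne : c ≠ u) : 0 < max (n c) (n u) := by
  by_contra hle
  push_neg at hle
  have h1 : n c = 0 := le_antisymm ((le_max_left _ _).trans hle) (hn.nonneg c)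
  have h2 : n u = 0 := le_antisymm ((le_max_right _ _).trans hle) (hn.nonneg u)
  obtain ⟨w, -, huniq⟩ := t.center p
  exact hne ((huniq c ⟨hc, (hn.zero_iff c).mp h1⟩).trans
    (huniq u ⟨hu, (hn.zero_iff u).mp h2⟩).symm)

lemma d_ge (hd : IsCanonDist t n d) {x y : t.Branch} (hne : x ≠ y) {m : t.T}
    (hm : IsGreatest (x.1 ∩ y.1) m) {w : t.T} (hw : w ∈ x.1 ∪ y.1) (hcov : m ⋖ w) :
    n w ≤ d x y :=
  (hd.2 x y hne m hm).2 ⟨w, ⟨hw, hcov⟩, rfl⟩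

lemma d_mem (hd : IsCanonDist t n d) {x y : t.Branch} (hne : x ≠ y) {m : t.T}
    (hm : IsGreatest (x.1 ∩ y.1) m) :
    ∃ w : t.T, (w ∈ x.1 ∪ y.1) ∧ m ⋖ w ∧ n w = d x y := by
  obtain ⟨w, ⟨hw1, hw2⟩, hw3⟩ := (hd.2 x y hne m hm).1
  exact ⟨w, hw1, hw2, hw3⟩

end Dist

end HeightTree

open HeightTree

/-- The canonical ultrametric on the boundary of a normed height tree generates the
canonical topology: a set is open in the canonical topology iff it is open in the
metric topology of `d`. -/
theorem stmt19 (t : HeightTree) (n : t.T → ℝ) (hn : IsTreeNorm t n)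
    (d : t.Branch → t.Branch → ℝ) (hd : IsCanonDist t n d) :
    ∀ S : Set t.Branch,
      @IsOpen t.Branch t.canonTop S ↔ ∀ x ∈ S, ∃ ε > 0, {y : t.Branch | d x y < ε} ⊆ S := by
  intro S
  constructor
  · -- canonically open sets are metrically open
    intro hS
    have hgen : TopologicalSpace.GenerateOpen
        ({S | ∃ x : t.T, t.h x ≠ ⊥ ∧ S = t.up x} ∪ {S | ∃ x : t.T, S = (t.up x)ᶜ}) S := hS
    clear hS
    induction hgen with
    | basic U hU =>
      rcases hU with ⟨v, hv, rfl⟩ | ⟨w, rfl⟩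
      · -- `U = ⇑v` with `h v ≠ ⊥`
        intro x hx
        refine ⟨n v, norm_pos hn hv, fun y hy => ?_⟩
        by_cases hyx : y = x
        · subst hyx; exact hx
        · have hne : x ≠ y := fun h => hyx h.symm
          obtain ⟨m, hm⟩ := exists_meet x y hne
          by_contra hvy
          have hmv : m < v := by
            rcases x.comparable hm.1.1 hx with h | h
            · exact lt_of_le_of_ne h fun he => hvy (he ▸ hm.1.2)
            · exact absurd (y.mem_of_le h hm.1.2) hvy
          obtain ⟨c, hcx, hccov, hcle⟩ := x.exists_succ hm.1.1
          have hcv : c ≤ v := hcle v hx hmv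
          have : n v ≤ d x y := (hn.mono c v hcv).trans (d_ge hd hne hm (Or.inl hcx) hccov)
          exact absurd hy (not_lt.mpr this)
      · -- `U = (⇑w)ᶜ`
        intro x hx
        have hwx : w ∉ x.1 := hx
        -- `u`: the least element below `w` not in `x`
        obtain ⟨u, ⟨huw, hux⟩, hule⟩ :=
          chain_least ((t.lower_finite w).subset Set.diff_subset)
            ⟨w, le_rfl, hwx⟩ ((t.lower_chain w).mono Set.diff_subset)
        -- `p`: the predecessor of `u`
        have hubot : u ≠ ⊥ := fun h => hux (h ▸ x.bot_mem)
        obtain ⟨p, ⟨hpu, hpne⟩, hpub⟩ :=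
          chain_greatest ((t.lower_finite u).subset Set.diff_subset)
            ⟨⊥, bot_le, fun h => hubot (Set.mem_singleton_iff.mp h).symm⟩ ((t.lower_chain u).mono Set.diff_subset)
        have hpltu : p < u := lt_of_le_of_ne hpu hpne
        have hpucov : p ⋖ u := by
          refine ⟨hpltu, fun s hps hsu => ?_⟩
          exact absurd (hpub ⟨hsu.le, hsu.ne⟩) (not_le_of_gt hps)
        have hpx : p ∈ x.1 := by
          by_contra hpx
          exact absurd (hule ⟨hpu.trans huw, hpx⟩) (not_le_of_gt hpltu)
        obtain ⟨c, hcx, hccov, -⟩ := x.exists_succ hpx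
        have hcu : c ≠ u := fun h => hux (h ▸ hcx)
        refine ⟨max (n c) (n u), covers_pos hn hccov hpucov hcu, fun y hy => ?_⟩
        intro hwy
        have huy : u ∈ y.1 := y.mem_of_le huw hwy
        have hne : x ≠ y := fun h => hux (h ▸ huy)
        obtain ⟨m, hm⟩ := exists_meet x y hne
        have hpy : p ∈ y.1 := y.mem_of_le hpu huy
        have hpm : p ≤ m := hm.2 ⟨hpx, hpy⟩
        have hmu : m < u := by
          rcases y.comparable hm.1.2 huy with h | h
          · exact lt_of_le_of_ne h fun he => hux (he ▸ hm.1.1)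
          · exact absurd (x.mem_of_le h hm.1.1) hux
        have hmp : m = p := by
          by_contra hne'
          exact hpucov.2 (lt_of_le_of_ne hpm fun h => hne' h.symm) hmu
        subst hmp
        have h1 : n c ≤ d x y := d_ge hd hne hm (Or.inl hcx) hccov
        have h2 : n u ≤ d x y := d_ge hd hne hm (Or.inr huy) hpucov
        exact absurd hy (not_lt.mpr (max_le h1 h2))
    | univ => exact fun x _ => ⟨1, one_pos, fun _ _ => Set.mem_univ _⟩
    | inter U V _ _ ihU ihV =>
      intro x hx
      obtain ⟨ε₁, hε₁, h1⟩ := ihU x hx.1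
      obtain ⟨ε₂, hε₂, h2⟩ := ihV x hx.2
      exact ⟨min ε₁ ε₂, lt_min hε₁ hε₂, fun y hy =>
        ⟨h1 (show d x y < ε₁ from lt_of_lt_of_le hy (min_le_left _ _)), h2 (show d x y < ε₂ from lt_of_lt_of_le hy (min_le_right _ _))⟩⟩
    | sUnion K _ ih =>
      intro x hx
      obtain ⟨U, hUK, hxU⟩ := hx
      obtain ⟨ε, hε, hb⟩ := ih U hUK x hxU
      exact ⟨ε, hε, fun y hy => ⟨U, hUK, hb hy⟩⟩
  · -- metrically open sets are canonically open
    intro hS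
    letI := t.canonTop
    rw [isOpen_iff_forall_mem_open]
    intro x hxS
    obtain ⟨ε, hε, hball⟩ := hS x hxS
    have hFfin : {z : t.T | ε ≤ n z}.Finite := hn.finite ε hε
    obtain ⟨v, ⟨hvx, hvF⟩, hvub⟩ :=
      chain_greatest ((hFfin.insert ⊥).subset Set.inter_subset_right)
        ⟨⊥, x.bot_mem, Set.mem_insert _ _⟩ (x.2.1.mono Set.inter_subset_left)
    refine ⟨t.up v ∩ ⋂ w ∈ {z : t.T | ε ≤ n z} \ x.1, (t.up w)ᶜ, ?_, ?_, ?_⟩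
    · -- the neighbourhood is contained in the ball, hence in `S`
      rintro y ⟨hyv, hyc⟩
      refine hball ?_
      simp only [Set.mem_iInter] at hyc
      by_cases hyx : y = x
      · subst hyx; exact lt_of_eq_of_lt (hd.1 y) hε
      · have hne : x ≠ y := fun h => hyx h.symm
        obtain ⟨m, hm⟩ := exists_meet x y hne
        have hvm : v ≤ m := hm.2 ⟨hvx, hyv⟩
        obtain ⟨w₀, hw₀mem, hw₀cov, hw₀eq⟩ := d_mem hd hne hm
        have hw₀ : n w₀ < ε := by
          by_contra hge
          push_neg at hge
          rcases hw₀mem with hwx | hwy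
          · -- in `x`: contradicts maximality of `v`
            have hle : w₀ ≤ v := hvub ⟨hwx, Set.mem_insert_of_mem _ hge⟩
            exact absurd (hle.trans_lt (hvm.trans_lt hw₀cov.1)) (lt_irrefl w₀)
          · -- in `y`: excluded by the complements
            have hw₀x : w₀ ∉ x.1 := fun h =>
              absurd (hm.2 ⟨h, hwy⟩) (not_le_of_gt hw₀cov.1)
            exact hyc w₀ ⟨hge, hw₀x⟩ hwy
        exact lt_of_eq_of_lt hw₀eq.symm hw₀
    · -- openness
      refine IsOpen.inter ?_ (Set.Finite.isOpen_biInter hFfin.diff fun w _ =>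
        TopologicalSpace.GenerateOpen.basic _ (Or.inr ⟨w, rfl⟩))
      by_cases hvb : t.h v = ⊥
      · have hvbot : v = ⊥ := by
          rcases hvF with h | h
          · exact h
          · exact absurd hε (not_lt.mpr (((hn.zero_iff v).mpr hvb) ▸ h))
        subst hvbot
        have : t.up (⊥ : t.T) = Set.univ := Set.eq_univ_of_forall fun b => b.bot_mem
        rw [this]; exact isOpen_univ
      · exact TopologicalSpace.GenerateOpen.basic _ (Or.inl ⟨v, hvb, rfl⟩)
    · exact ⟨hvx, Set.mem_iInter₂.mpr fun w hw => hw.2⟩
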